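/- Let n ≥ 1 and let K ⊆ ℝⁿ be nonempty and compact. Then K is a ball-body if and only if K is convex and for every point x in the topological boundary of K there exists y ∈ ℝⁿ with K ⊆ B(y,1) and ‖x − y‖ = 1 (such a y necessarily lies in K^c). -/

import Mathlib

open Metric Set

open RealInnerProductSpace

noncomputable section

/-- The `c`-dual of a set `A ⊆ ℝⁿ`. -/
def cDual {n : ℕ} (A : Set (EuclideanSpace ℝ (Fin n))) : Set (EuclideanSpace ℝ (Fin n)) :=
  {y | ∀ x ∈ A, ‖x - y‖ ≤ 1}

/-- The `c`-hull of a set: `conv_c(A) = (A^c)^c`. -/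
def cHull {n : ℕ} (A : Set (EuclideanSpace ℝ (Fin n))) : Set (EuclideanSpace ℝ (Fin n)) :=
  cDual (cDual A)

lemma cDual_eq_iInter {n : ℕ} (A : Set (EuclideanSpace ℝ (Fin n))) :
    cDual A = ⋂ x ∈ A, closedBall x 1 := by
  ext y
  simp [cDual, mem_closedBall, dist_eq_norm, norm_sub_rev y]

lemma cDual_convex {n : ℕ} (A : Set (EuclideanSpace ℝ (Fin n))) : Convex ℝ (cDual A) := by
  rw [cDual_eq_iInter]
  exact convex_iInter fun x => convex_iInter fun _ => convex_closedBall _ _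

lemma subset_cHull {n : ℕ} (A : Set (EuclideanSpace ℝ (Fin n))) : A ⊆ cHull A := by
  intro x hx y hy
  rw [norm_sub_rev]
  exact hy x hx

/-- A nonempty compact `K ⊆ ℝⁿ` is a ball-body iff it is convex and every boundary point has
a supporting unit ball: some `y` with `K ⊆ B(y,1)` and `‖x - y‖ = 1`. -/
theorem stmt1 (n : ℕ) (hn : 1 ≤ n) (K : Set (EuclideanSpace ℝ (Fin n)))
    (hne : K.Nonempty) (hcomp : IsCompact K) :
    K = cHull K ↔
      Convex ℝ K ∧ ∀ x ∈ frontier K, ∃ y : EuclideanSpace ℝ (Fin n),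
        K ⊆ closedBall y 1 ∧ ‖x - y‖ = 1 := by
  constructor
  · intro h
    constructor
    · rw [h]; exact cDual_convex _
    · intro x hx
      have hxK : x ∈ K := by
        have := hcomp.isClosed.frontier_subset
        exact this hx
      -- cDual K is nonempty
      have hDne : (cDual K).Nonempty := by
        by_contra hemp
        rw [not_nonempty_iff_eq_empty] at hemp
        have huniv : K = univ := by
          rw [h]
          unfold cHull
          rw [hemp]
          ext y; simp [cDual]
        obtain ⟨R, hR⟩ := hcomp.isBounded.subset_closedBall 0
        set w : EuclideanSpace ℝ (Fin n) := EuclideanSpace.single ⟨0, hn⟩ (|R| + 1) with hw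
        have hwK : w ∈ K := by rw [huniv]; trivial
        have := hR hwK
        rw [mem_closedBall, dist_zero_right, hw, EuclideanSpace.norm_single] at this
        have : |R| + 1 ≤ R := by
          rwa [Real.norm_eq_abs, abs_of_nonneg (by positivity)] at this
        have := le_abs_self R
        linarith
      -- cDual K is compact
      have hDcl : IsClosed (cDual K) := by
        rw [cDual_eq_iInter]
        exact isClosed_biInter fun x _ => isClosed_closedBall
      obtain ⟨a, haK⟩ := hne
      have hDsub : cDual K ⊆ closedBall a 1 := by
        intro y hy
        rw [mem_closedBall, dist_comm, dist_eq_norm]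
        exact hy a haK
      have hDcomp : IsCompact (cDual K) :=
        (isCompact_closedBall a 1).of_isClosed_subset hDcl hDsub
      obtain ⟨y₀, hy₀D, hy₀max'⟩ :=
        hDcomp.exists_isMaxOn hDne
          ((continuous_const.sub continuous_id).norm.continuousOn :
            ContinuousOn (fun y => ‖x - y‖) (cDual K))
      have hy₀max : ∀ y ∈ cDual K, ‖x - y‖ ≤ ‖x - y₀‖ := fun y hy => hy₀max' hy
      have hle : ‖x - y₀‖ ≤ 1 := hy₀D x hxK
      have heq : ‖x - y₀‖ = 1 := by
        rcases lt_or_eq_of_le hle with hlt | heq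
        · exfalso
          have hxint : x ∈ interior K := by
            rw [mem_interior]
            refine ⟨ball x (1 - ‖x - y₀‖), ?_, isOpen_ball, mem_ball_self (by linarith)⟩
            intro z hz
            rw [h]
            intro y hy
            have h1 : ‖y - x‖ ≤ ‖x - y₀‖ := by rw [norm_sub_rev]; exact hy₀max y hy
            have h2 : ‖x - z‖ < 1 - ‖x - y₀‖ := by
              rw [mem_ball, dist_comm, dist_eq_norm] at hz; exact hz
            calc ‖y - z‖ ≤ ‖y - x‖ + ‖x - z‖ := norm_sub_le_norm_sub_add_norm_sub y x z
              _ ≤ 1 := by linarith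
          exact hx.2 hxint
        · exact heq
      exact ⟨y₀, fun k hk => by
        rw [mem_closedBall, dist_eq_norm]; exact hy₀D k hk, heq⟩
  · rintro ⟨hconv, hsupp⟩
    refine le_antisymm (subset_cHull K) ?_
    intro z hz
    by_contra hzK
    -- projection of z onto K
    obtain ⟨p, hpK, hproj⟩ :=
      exists_norm_eq_iInf_of_complete_convex hne (hcomp.isClosed.isComplete) hconv z
    have hinner : ∀ w ∈ K, ⟪z - p, w - p⟫ ≤ 0 :=
      (norm_eq_iInf_iff_real_inner_le_zero hconv hpK).1 hproj
    set d : ℝ := ‖z - p‖ with hd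
    have hd0 : 0 < d := by
      rw [hd, norm_pos_iff, sub_ne_zero]
      intro hzp; exact hzK (hzp ▸ hpK)
    have hbdd : BddBelow (Set.range fun w : K => ‖z - (w : EuclideanSpace ℝ (Fin n))‖) :=
      ⟨0, Set.forall_mem_range.2 fun _ => norm_nonneg _⟩
    -- p is a frontier point
    have hpfr : p ∈ frontier K := by
      rw [hcomp.isClosed.frontier_eq]
      refine ⟨hpK, fun hint => ?_⟩
      rw [mem_interior_iff_mem_nhds, Metric.mem_nhds_iff] at hint
      obtain ⟨ε, hε, hball⟩ := hint
      set δ : ℝ := min ε d / 2 with hδ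
      have hδ0 : 0 < δ := by positivity
      have hδε : δ < ε := by
        have := min_le_left ε d; rw [hδ]; linarith [lt_min hε hd0]
      have hδd : δ < d := by
        have := min_le_right ε d; rw [hδ]; linarith
      set p' : EuclideanSpace ℝ (Fin n) := p + (δ / d) • (z - p) with hp'
      have hp'K : p' ∈ K := by
        apply hball
        rw [mem_ball, dist_eq_norm, hp', add_sub_cancel_left, norm_smul,
          Real.norm_eq_abs, abs_of_nonneg (by positivity), ← hd]
        rw [div_mul_cancel₀ _ (ne_of_gt hd0)]
        exact hδε
      have hzp' : ‖z - p'‖ = d - δ := by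
        have : z - p' = (1 - δ / d) • (z - p) := by
          rw [hp']; module
        rw [this, norm_smul, Real.norm_eq_abs, ← hd,
          abs_of_nonneg (by rw [sub_nonneg]; rw [div_le_one hd0]; linarith)]
        field_simp
      have := ciInf_le hbdd ⟨p', hp'K⟩
      rw [← hproj] at this
      simp only at this
      rw [hzp'] at this
      linarith
    obtain ⟨y, hKy, hpy⟩ := hsupp p hpfr
    have hyD : y ∈ cDual K := by
      intro k hk
      have := hKy hk
      rwa [mem_closedBall, dist_eq_norm] at this
    set α : ℝ := ⟪z - p, p - y⟫ with hα
    have hpy2 : ‖p - y‖ ^ 2 = 1 := by rw [hpy]; norm_num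
    have hzy : ‖z - y‖ ^ 2 = d ^ 2 + 2 * α + 1 := by
      have : z - y = (z - p) + (p - y) := by abel
      rw [this, norm_add_sq_real, hpy2, ← hd, ← hα]
    rcases le_or_gt 0 α with hα0 | hα0
    · -- y itself separates z
      have h1 : ‖y - z‖ ≤ 1 := hz y hyD
      have h2 : ‖y - z‖ ^ 2 ≤ 1 := by nlinarith [norm_nonneg (y - z)]
      rw [norm_sub_rev, hzy] at h2
      nlinarith
    · -- shift the center
      set t : ℝ := -2 * α / d ^ 2 with ht
      have ht0 : 0 < t := by
        rw [ht]
        apply div_pos (by linarith) (by positivity)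
      set c : EuclideanSpace ℝ (Fin n) := y - t • (z - p) with hc
      have hcD : c ∈ cDual K := by
        intro k hk
        have hky : ‖k - y‖ ≤ 1 := hyD k hk
        have hkp : ⟪z - p, k - p⟫ ≤ 0 := hinner k hk
        have hexp : k - c = (k - y) + t • (z - p) := by rw [hc]; abel
        have hsq : ‖k - c‖ ^ 2 = ‖k - y‖ ^ 2 + 2 * (t * ⟪k - y, z - p⟫) + t ^ 2 * d ^ 2 := by
          rw [hexp, norm_add_sq_real, real_inner_smul_right, norm_smul, Real.norm_eq_abs,
            mul_pow, sq_abs, ← hd]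
        have hsplit : ⟪k - y, z - p⟫ = ⟪z - p, k - p⟫ + α := by
          rw [hα, real_inner_comm]
          have hky' : (k : EuclideanSpace ℝ (Fin n)) - y = (k - p) + (p - y) := by abel
          rw [hky', inner_add_right]
        have hle2 : ‖k - c‖ ^ 2 ≤ 1 := by
          rw [hsq, hsplit]
          have hts : 2 * (t * α) + t ^ 2 * d ^ 2 = 0 := by
            rw [ht]; field_simp; ring
          nlinarith [norm_nonneg (k - y)]
        nlinarith [norm_nonneg (k - c)]
      have h1 : ‖c - z‖ ≤ 1 := hz c hcD
      have h2 : ‖c - z‖ ^ 2 ≤ 1 := by nlinarith [norm_nonneg (c - z)]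
      have hexp : z - c = (z - y) + t • (z - p) := by rw [hc]; abel
      have hiz : ⟪z - y, z - p⟫ = d ^ 2 + α := by
        have : z - y = (z - p) + (p - y) := by abel
        rw [this, inner_add_left, real_inner_self_eq_norm_sq, ← hd, hα, real_inner_comm]
      have hsq : ‖z - c‖ ^ 2 = ‖z - y‖ ^ 2 + 2 * (t * ⟪z - y, z - p⟫) + t ^ 2 * d ^ 2 := by
        rw [hexp, norm_add_sq_real, real_inner_smul_right, norm_smul, Real.norm_eq_abs,
          mul_pow, sq_abs, ← hd]
      have hval : ‖z - c‖ ^ 2 = d ^ 2 - 2 * α + 1 := by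
        rw [hsq, hiz, hzy, ht]
        field_simp
        ring
      rw [norm_sub_rev, hval] at h2
      have hd2 : 0 < d ^ 2 := by positivity
      linarith
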